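/- arXiv:1807.08424 — 3 statements merged into one kernel-verified Lean document; each statement's English description precedes it below -/
import Mathlib

section
/- Let t₀ > 0 and t₁ > 0 be real numbers and m₀ ≥ 1 an integer. Then ∫₀^∞ (1 + t₁/t) · e^{−t/t₁} · min( (t/t₀)^{m₀}, 1 ) dt ≤ 2^{−m₀} · ( t₀/(m₀+1) + 2·t₁/m₀ ) + t₁ · (1 + 2·t₁/t₀) · e^{−t₀/(2·t₁)}. -/
open Real

private lemma aux_ineq (P Q t₀ t₁ c d : ℝ) (hP : 0 < P) (hQ : 0 < Q)
    (hc : 0 < c) (hd : 0 < d) (ht₀ : 0 < t₀) (ht₁ : 0 < t₁) :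
    P⁻¹ * (P * t₀ / (Q * 2) / c) + t₁ / P * (P / Q / d) ≤ Q⁻¹ * (t₀ / c + 2 * t₁ / d) := by
  have hL : P⁻¹ * (P * t₀ / (Q * 2) / c) + t₁ / P * (P / Q / d)
      = t₀ / (Q * 2 * c) + t₁ / (Q * d) := by
    field_simp
  have hR : Q⁻¹ * (t₀ / c + 2 * t₁ / d) = t₀ / (Q * c) + 2 * t₁ / (Q * d) := by
    field_simp
  rw [hL, hR]
  have i1 : t₀ / (Q * 2 * c) ≤ t₀ / (Q * c) := by
    rw [div_le_div_iff₀ (by positivity) (by positivity)]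
    nlinarith [mul_pos ht₀ (mul_pos hQ hc)]
  have i2 : t₁ / (Q * d) ≤ 2 * t₁ / (Q * d) := by
    rw [div_le_div_iff₀ (by positivity) (by positivity)]
    nlinarith [mul_pos ht₁ (mul_pos hQ hd)]
  linarith

/-- The integral estimate (Eq. (S14) of the supplementary material):
`∫₀^∞ (1 + t₁/t)·e^{−t/t₁}·min((t/t₀)^{m₀}, 1) dt
   ≤ 2^{−m₀}·(t₀/(m₀+1) + 2t₁/m₀) + t₁·(1 + 2t₁/t₀)·e^{−t₀/(2t₁)}`. -/
theorem integral_tail_estimate (t₀ t₁ : ℝ) (ht₀ : 0 < t₀) (ht₁ : 0 < t₁)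
    (m₀ : ℕ) (hm₀ : 1 ≤ m₀) :
    (∫ t in Set.Ioi (0 : ℝ),
        (1 + t₁ / t) * Real.exp (-t / t₁) * min ((t / t₀) ^ m₀) 1) ≤
      ((2 : ℝ) ^ m₀)⁻¹ * (t₀ / ((m₀ : ℝ) + 1) + 2 * t₁ / (m₀ : ℝ)) +
        t₁ * (1 + 2 * t₁ / t₀) * Real.exp (-t₀ / (2 * t₁)) := by
  obtain ⟨k, rfl⟩ : ∃ k, m₀ = k + 1 := ⟨m₀ - 1, (Nat.succ_pred_eq_of_pos hm₀).symm⟩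
  set a : ℝ := t₀ / 2 with ha_def
  have ha : 0 < a := by positivity
  set F : ℝ → ℝ := fun t => (1 + t₁ / t) * Real.exp (-t / t₁) * min ((t / t₀) ^ (k+1)) 1
    with hF_def
  set g1 : ℝ → ℝ := fun t => (t₀ ^ (k+1))⁻¹ * t ^ (k+1) + (t₁ / t₀ ^ (k+1)) * t ^ k
    with hg1_def
  set g2 : ℝ → ℝ := fun t => (1 + 2 * t₁ / t₀) * Real.exp (-t / t₁) with hg2_def
  -- continuity / measurability of F on (0, ∞)
  have hFcont : ContinuousOn F (Set.Ioi (0:ℝ)) := by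
    apply ContinuousOn.mul
    apply ContinuousOn.mul
    · exact continuousOn_const.add (continuousOn_const.div continuousOn_id
        (fun x hx => ne_of_gt hx))
    · exact (Real.continuous_exp.comp (continuous_id.neg.div_const t₁)).continuousOn
    · exact (Continuous.min ((continuous_id.div_const t₀).pow _) continuous_const).continuousOn
  have hFnonneg : ∀ t ∈ Set.Ioi (0:ℝ), 0 ≤ F t := by
    intro t ht
    have ht' : (0:ℝ) < t := ht
    apply mul_nonneg (mul_nonneg _ (Real.exp_nonneg _))
    · exact le_min (by positivity) zero_le_one
    · positivity
  -- F ≤ g1 on (0, a]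
  have hle1 : ∀ t ∈ Set.Ioc (0:ℝ) a, F t ≤ g1 t := by
    intro t ht
    have ht0 : (0:ℝ) < t := ht.1
    have h1 : F t ≤ (1 + t₁ / t) * (t / t₀) ^ (k+1) := by
      have hmin : min ((t / t₀) ^ (k+1)) 1 ≤ (t / t₀) ^ (k+1) := min_le_left _ _
      have hexp : Real.exp (-t / t₁) ≤ 1 := by
        apply Real.exp_le_one_iff.mpr
        have : 0 < t / t₁ := by positivity
        simp only [neg_div]
        linarith
      calc F t ≤ (1 + t₁ / t) * 1 * min ((t / t₀) ^ (k+1)) 1 := by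
              apply mul_le_mul_of_nonneg_right
              · apply mul_le_mul_of_nonneg_left hexp (by positivity)
              · exact le_min (by positivity) zero_le_one
        _ = (1 + t₁ / t) * min ((t / t₀) ^ (k+1)) 1 := by ring
        _ ≤ (1 + t₁ / t) * (t / t₀) ^ (k+1) := by
              apply mul_le_mul_of_nonneg_left hmin (by positivity)
    refine h1.trans_eq ?_
    simp only [hg1_def]
    rw [div_pow, pow_succ t k]
    field_simp
  -- F ≤ g2 on (a, ∞)
  have hle2 : ∀ t ∈ Set.Ioi a, F t ≤ g2 t := by
    intro t ht
    have ht0 : (0:ℝ) < t := lt_trans ha ht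
    have hta : a < t := ht
    have h1 : t₁ / t ≤ 2 * t₁ / t₀ := by
      rw [div_le_div_iff₀ ht0 ht₀]
      nlinarith [ha_def]
    calc F t ≤ (1 + t₁ / t) * Real.exp (-t / t₁) * 1 := by
            apply mul_le_mul_of_nonneg_left (min_le_right _ _)
            positivity
      _ = (1 + t₁ / t) * Real.exp (-t / t₁) := by ring
      _ ≤ (1 + 2 * t₁ / t₀) * Real.exp (-t / t₁) := by
            apply mul_le_mul_of_nonneg_right _ (Real.exp_nonneg _)
            linarith
  -- integrability of g1 on Ioc 0 a
  have hg1int : MeasureTheory.IntegrableOn g1 (Set.Ioc (0:ℝ) a) := by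
    apply Continuous.integrableOn_Ioc
    continuity
  -- integrability of exp(-t/t₁) on Ioi a
  have hexpint : MeasureTheory.IntegrableOn (fun t => Real.exp (-t / t₁)) (Set.Ioi a) := by
    have h := exp_neg_integrableOn_Ioi a (show (0:ℝ) < t₁⁻¹ by positivity)
    convert h using 2 with t
    field_simp
  have hg2int : MeasureTheory.IntegrableOn g2 (Set.Ioi a) := hexpint.const_mul _
  -- integrability of F on each piece
  have hFmeas1 : MeasureTheory.AEStronglyMeasurable F
      (MeasureTheory.volume.restrict (Set.Ioc (0:ℝ) a)) :=
    (hFcont.mono Set.Ioc_subset_Ioi_self).aestronglyMeasurable measurableSet_Ioc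
  have hFmeas2 : MeasureTheory.AEStronglyMeasurable F
      (MeasureTheory.volume.restrict (Set.Ioi a)) :=
    (hFcont.mono (Set.Ioi_subset_Ioi ha.le)).aestronglyMeasurable measurableSet_Ioi
  have hFint1 : MeasureTheory.IntegrableOn F (Set.Ioc (0:ℝ) a) := by
    apply MeasureTheory.Integrable.mono hg1int hFmeas1
    filter_upwards [MeasureTheory.ae_restrict_mem measurableSet_Ioc] with t ht
    rw [Real.norm_eq_abs, Real.norm_eq_abs, abs_of_nonneg (hFnonneg t ht.1)]
    exact (hle1 t ht).trans (le_abs_self _)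
  have hFint2 : MeasureTheory.IntegrableOn F (Set.Ioi a) := by
    apply MeasureTheory.Integrable.mono hg2int hFmeas2
    filter_upwards [MeasureTheory.ae_restrict_mem measurableSet_Ioi] with t ht
    rw [Real.norm_eq_abs, Real.norm_eq_abs, abs_of_nonneg (hFnonneg t (lt_trans ha ht))]
    exact (hle2 t ht).trans (le_abs_self _)
  -- split the integral
  have hsplit : (∫ t in Set.Ioi (0:ℝ), F t) =
      (∫ t in Set.Ioc (0:ℝ) a, F t) + ∫ t in Set.Ioi a, F t := by
    rw [← MeasureTheory.setIntegral_union (Set.Ioc_disjoint_Ioi le_rfl) measurableSet_Ioi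
      hFint1 hFint2, Set.Ioc_union_Ioi_eq_Ioi ha.le]
  -- compute ∫ g1 on Ioc 0 a
  have hg1val : (∫ t in Set.Ioc (0:ℝ) a, g1 t) =
      (t₀ ^ (k+1))⁻¹ * (a ^ (k+2) / ((k:ℝ)+2)) + (t₁ / t₀ ^ (k+1)) * (a ^ (k+1) / ((k:ℝ)+1)) := by
    rw [← intervalIntegral.integral_of_le ha.le]
    simp only [hg1_def]
    rw [intervalIntegral.integral_add, intervalIntegral.integral_const_mul,
      intervalIntegral.integral_const_mul, integral_pow, integral_pow]
    · rw [zero_pow (Nat.succ_ne_zero _), zero_pow (Nat.succ_ne_zero _)]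
      push_cast
      ring
    · exact (intervalIntegral.intervalIntegrable_pow _).const_mul _
    · exact (intervalIntegral.intervalIntegrable_pow _).const_mul _
  -- compute ∫ exp(-t/t₁) on Ioi a
  have hexpval : (∫ t in Set.Ioi a, Real.exp (-t / t₁)) = t₁ * Real.exp (-a / t₁) := by
    have hderiv : ∀ x ∈ Set.Ici a, HasDerivAt (fun t => -t₁ * Real.exp (-t / t₁))
        (Real.exp (-x / t₁)) x := by
      intro x _
      have h1 : HasDerivAt (fun t : ℝ => -t / t₁) (-1 / t₁) x :=
        (hasDerivAt_id x).neg.div_const t₁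
      have h2 := (h1.exp).const_mul (-t₁)
      rw [show -t₁ * (Real.exp (-x / t₁) * (-1 / t₁)) = Real.exp (-x / t₁) by field_simp] at h2
      exact h2
    have htend : Filter.Tendsto (fun t => -t₁ * Real.exp (-t / t₁)) Filter.atTop
        (nhds 0) := by
      have h1 : Filter.Tendsto (fun t : ℝ => -t / t₁) Filter.atTop Filter.atBot :=
        Filter.Tendsto.atBot_div_const ht₁ Filter.tendsto_neg_atTop_atBot
      have h2 := Real.tendsto_exp_atBot.comp h1
      have h3 := h2.const_mul (-t₁)
      simpa using h3
    have := MeasureTheory.integral_Ioi_of_hasDerivAt_of_tendsto' hderiv hexpint htend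
    rw [this]; ring
  -- bound each piece
  have hb1 : (∫ t in Set.Ioc (0:ℝ) a, F t) ≤
      ((2:ℝ) ^ (k+1))⁻¹ * (t₀ / ((k:ℝ) + 1 + 1) + 2 * t₁ / ((k:ℝ) + 1)) := by
    calc (∫ t in Set.Ioc (0:ℝ) a, F t) ≤ ∫ t in Set.Ioc (0:ℝ) a, g1 t :=
          MeasureTheory.setIntegral_mono_on hFint1 hg1int measurableSet_Ioc hle1
      _ = (t₀ ^ (k+1))⁻¹ * (a ^ (k+2) / ((k:ℝ)+2)) + (t₁ / t₀ ^ (k+1)) * (a ^ (k+1) / ((k:ℝ)+1)) :=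
          hg1val
      _ ≤ ((2:ℝ) ^ (k+1))⁻¹ * (t₀ / ((k:ℝ) + 1 + 1) + 2 * t₁ / ((k:ℝ) + 1)) := by
          have h1 : a ^ (k+2) = t₀ ^ (k+1) * t₀ / ((2:ℝ) ^ (k+1) * 2) := by
            rw [ha_def, div_pow, pow_succ t₀ (k+1), pow_succ (2:ℝ) (k+1)]
          have h2 : a ^ (k+1) = t₀ ^ (k+1) / (2:ℝ) ^ (k+1) := by rw [ha_def, div_pow]
          rw [h1, h2]
          rw [show ((k:ℝ) + 1 + 1) = (k:ℝ) + 2 by ring]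
          exact aux_ineq _ _ _ _ _ _ (by positivity) (by positivity) (by positivity)
            (by positivity) ht₀ ht₁
  have hb2 : (∫ t in Set.Ioi a, F t) ≤ t₁ * (1 + 2 * t₁ / t₀) * Real.exp (-t₀ / (2 * t₁)) := by
    calc (∫ t in Set.Ioi a, F t) ≤ ∫ t in Set.Ioi a, g2 t :=
          MeasureTheory.setIntegral_mono_on hFint2 hg2int measurableSet_Ioi hle2
      _ = (1 + 2 * t₁ / t₀) * ∫ t in Set.Ioi a, Real.exp (-t / t₁) := by
          simp only [hg2_def]
          exact MeasureTheory.integral_const_mul _ _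
      _ = t₁ * (1 + 2 * t₁ / t₀) * Real.exp (-t₀ / (2 * t₁)) := by
          rw [hexpval, ha_def]
          rw [show -(t₀/2) / t₁ = -t₀ / (2 * t₁) by ring]
          ring
  calc (∫ t in Set.Ioi (0:ℝ), F t)
      = (∫ t in Set.Ioc (0:ℝ) a, F t) + ∫ t in Set.Ioi a, F t := hsplit
    _ ≤ ((2:ℝ) ^ (k+1))⁻¹ * (t₀ / ((k:ℝ) + 1 + 1) + 2 * t₁ / ((k:ℝ) + 1)) +
        t₁ * (1 + 2 * t₁ / t₀) * Real.exp (-t₀ / (2 * t₁)) := add_le_add hb1 hb2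
    _ = ((2:ℝ) ^ (k+1))⁻¹ * (t₀ / (((k+1 : ℕ):ℝ) + 1) + 2 * t₁ / ((k+1 : ℕ):ℝ)) +
        t₁ * (1 + 2 * t₁ / t₀) * Real.exp (-t₀ / (2 * t₁)) := by push_cast; ring
end

section
/- Let O be an operator on the n-site quantum chain and let S ⊆ {1,…,n}. Then the truncation satisfies ‖O^{(S)}‖ ≤ ‖O‖, i.e. the normalized partial trace over S^c tensored with the identity is a contraction in operator norm. -/
open scoped Matrix.Norms.L2Operator
set_option linter.unusedSectionVars false

/-- Operators on the `n`-site chain with local dimension `d`: matrices indexed by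
configurations `Fin n → Fin d`, acting on `(ℂ^d)^{⊗n}`, with the ℓ²→ℓ² operator norm. -/
abbrev ChainOp (n d : ℕ) := Matrix (Fin n → Fin d) (Fin n → Fin d) ℂ

/-- Truncation `O^{(S)} := d^{-|Sᶜ|} (tr_{Sᶜ} O) ⊗ 1_{Sᶜ}` of an operator to the subset `S`;
summing over configurations of all `n` sites with the normalization `d^{-n}` realizes the
normalized partial trace over `Sᶜ`. -/
noncomputable def truncate {n d : ℕ} (O : ChainOp n d) (S : Finset (Fin n)) : ChainOp n d :=
  fun x y =>
    if ∀ i ∉ S, x i = y i then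
      ((d : ℂ) ^ n)⁻¹ * ∑ z : Fin n → Fin d,
        O (fun i => if i ∈ S then x i else z i) (fun i => if i ∈ S then y i else z i)
    else 0

open Finset Matrix

section core
variable {ι κA κB : Type*} [Fintype ι] [Fintype κA] [Fintype κB]
  [DecidableEq ι] [DecidableEq κA] [DecidableEq κB]

/-- abstract truncation: normalized partial trace over the `κB` factor, tensor identity. -/
noncomputable def truncAux (e : ι ≃ κA × κB) (N : Matrix ι ι ℂ) : Matrix ι ι ℂ :=
  fun x y => if (e x).2 = (e y).2 then
    ((Fintype.card κB : ℂ))⁻¹ * ∑ c : κB, N (e.symm ((e x).1, c)) (e.symm ((e y).1, c))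
  else 0

/-- slice of a vector -/
def sliceVec (e : ι ≃ κA × κB) (c w : κB) (u : ι → ℂ) : ι → ℂ :=
  fun ξ => if (e ξ).2 = c then u (e.symm ((e ξ).1, w)) else 0

lemma reindex2 (e : ι ≃ κA × κB) (f : ι → ι → ℂ) :
    ∑ ξ, ∑ η, f ξ η = ∑ p : κA × κB, ∑ q : κA × κB, f (e.symm p) (e.symm q) := by
  rw [← Equiv.sum_comp e.symm (fun ξ => ∑ η, f ξ η)]
  exact Finset.sum_congr rfl fun p _ => (Equiv.sum_comp e.symm _).symm

lemma slice_dot (e : ι ≃ κA × κB) (N : Matrix ι ι ℂ) (c w : κB) (u v : ι → ℂ) :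
    star (sliceVec e c w u) ⬝ᵥ (N *ᵥ sliceVec e c w v)
      = ∑ a : κA, ∑ b : κA,
          star (u (e.symm (a, w))) * N (e.symm (a, c)) (e.symm (b, c)) * v (e.symm (b, w)) := by
  have h1 : star (sliceVec e c w u) ⬝ᵥ (N *ᵥ sliceVec e c w v)
      = ∑ ξ, ∑ η, star (sliceVec e c w u ξ) * (N ξ η * sliceVec e c w v η) := by
    simp [dotProduct, Matrix.mulVec, Finset.mul_sum]
  rw [h1, reindex2 e]
  rw [Fintype.sum_prod_type]
  simp only [sliceVec, Equiv.apply_symm_apply, Fintype.sum_prod_type]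
  simp only [apply_ite (star : ℂ → ℂ), star_zero, ite_mul, mul_ite, zero_mul, mul_zero,
    Finset.sum_ite_eq', Finset.mem_univ, if_true]
  refine Finset.sum_congr rfl fun a _ => ?_
  rw [Finset.sum_comm]
  simp [Finset.sum_ite_eq', mul_assoc]


lemma swap4 (F : κA → κB → κA → κB → ℂ) :
    ∑ a : κA, ∑ γ : κB, ∑ b : κA, ∑ c : κB, F a γ b c
      = ∑ c : κB, ∑ γ : κB, ∑ a : κA, ∑ b : κA, F a γ b c := by
  have h1 : ∑ a : κA, ∑ γ : κB, ∑ b : κA, ∑ c : κB, F a γ b c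
      = ∑ a : κA, ∑ γ : κB, ∑ c : κB, ∑ b : κA, F a γ b c :=
    Finset.sum_congr rfl fun a _ => Finset.sum_congr rfl fun γ _ => Finset.sum_comm
  have h2 : ∑ a : κA, ∑ γ : κB, ∑ c : κB, ∑ b : κA, F a γ b c
      = ∑ a : κA, ∑ c : κB, ∑ γ : κB, ∑ b : κA, F a γ b c :=
    Finset.sum_congr rfl fun a _ => Finset.sum_comm
  have h3 : ∑ a : κA, ∑ c : κB, ∑ γ : κB, ∑ b : κA, F a γ b c
      = ∑ c : κB, ∑ a : κA, ∑ γ : κB, ∑ b : κA, F a γ b c := Finset.sum_comm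
  have h4 : ∑ c : κB, ∑ a : κA, ∑ γ : κB, ∑ b : κA, F a γ b c
      = ∑ c : κB, ∑ γ : κB, ∑ a : κA, ∑ b : κA, F a γ b c :=
    Finset.sum_congr rfl fun c _ => Finset.sum_comm
  rw [h1, h2, h3, h4]

lemma dot_truncAux (e : ι ≃ κA × κB) (N : Matrix ι ι ℂ) (u v : ι → ℂ) :
    star u ⬝ᵥ (truncAux e N *ᵥ v)
      = (Fintype.card κB : ℂ)⁻¹ * ∑ c : κB, ∑ w : κB,
          star (sliceVec e c w u) ⬝ᵥ (N *ᵥ sliceVec e c w v) := by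
  have h1 : star u ⬝ᵥ (truncAux e N *ᵥ v)
      = ∑ ξ, ∑ η, star (u ξ) * (truncAux e N ξ η * v η) := by
    simp [dotProduct, Matrix.mulVec, Finset.mul_sum]
  simp only [slice_dot]
  rw [h1, reindex2 e, Fintype.sum_prod_type]
  simp only [truncAux, Equiv.apply_symm_apply, Fintype.sum_prod_type, mul_ite, ite_mul,
    mul_zero, zero_mul, Finset.sum_ite_eq, Finset.mem_univ, if_true]
  rw [Finset.mul_sum]
  simp only [Finset.mul_sum]
  rw [← swap4 (fun a γ b c => ((Fintype.card κB : ℂ))⁻¹ *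
      (star (u (e.symm (a, γ))) * N (e.symm (a, c)) (e.symm (b, c)) * v (e.symm (b, γ))))]
  refine Finset.sum_congr rfl fun a _ => Finset.sum_congr rfl fun γ _ =>
    Finset.sum_congr rfl fun b _ => ?_
  rw [Finset.sum_mul, Finset.mul_sum]
  exact Finset.sum_congr rfl fun c _ => by ring

lemma inner_bound (N : Matrix ι ι ℂ) (u v : ι → ℂ) :
    ‖star u ⬝ᵥ (N *ᵥ v)‖
      ≤ ‖N‖ * (Real.sqrt (∑ x, ‖u x‖ ^ 2) * Real.sqrt (∑ x, ‖v x‖ ^ 2)) := by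
  set u' : EuclideanSpace ℂ ι := (WithLp.equiv 2 (ι → ℂ)).symm u with hu'
  set v' : EuclideanSpace ℂ ι := (WithLp.equiv 2 (ι → ℂ)).symm v with hv'
  set w' : EuclideanSpace ℂ ι := (WithLp.equiv 2 (ι → ℂ)).symm (N *ᵥ v) with hw'
  have h1 : star u ⬝ᵥ (N *ᵥ v) = (inner ℂ u' w' : ℂ) := by
    simp [PiLp.inner_apply, RCLike.inner_apply, dotProduct, hu', hw', mul_comm]
  have h2 : ‖(inner ℂ u' w' : ℂ)‖ ≤ ‖u'‖ * ‖w'‖ := norm_inner_le_norm u' w'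
  have h3 : ‖w'‖ ≤ ‖N‖ * ‖v'‖ := Matrix.l2_opNorm_mulVec N v'
  have h4 : ‖u'‖ = Real.sqrt (∑ x, ‖u x‖ ^ 2) := by
    rw [EuclideanSpace.norm_eq]; rfl
  have h5 : ‖v'‖ = Real.sqrt (∑ x, ‖v x‖ ^ 2) := by
    rw [EuclideanSpace.norm_eq]; rfl
  rw [h1]
  calc ‖(inner ℂ u' w' : ℂ)‖ ≤ ‖u'‖ * ‖w'‖ := h2
    _ ≤ ‖u'‖ * (‖N‖ * ‖v'‖) := by
        exact mul_le_mul_of_nonneg_left h3 (norm_nonneg _)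
    _ = ‖N‖ * (Real.sqrt (∑ x, ‖u x‖ ^ 2) * Real.sqrt (∑ x, ‖v x‖ ^ 2)) := by
        rw [h4, h5]; ring

lemma slice_sq (e : ι ≃ κA × κB) (c w : κB) (u : ι → ℂ) :
    ∑ ξ, ‖sliceVec e c w u ξ‖ ^ 2 = ∑ a : κA, ‖u (e.symm (a, w))‖ ^ 2 := by
  rw [← Equiv.sum_comp e.symm (fun ξ => ‖sliceVec e c w u ξ‖ ^ 2), Fintype.sum_prod_type]
  simp only [sliceVec, Equiv.apply_symm_apply]
  refine Finset.sum_congr rfl fun a _ => ?_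
  simp [apply_ite (norm : ℂ → ℝ), apply_ite (fun r : ℝ => r ^ 2), Finset.sum_ite_eq']

lemma total_sq (e : ι ≃ κA × κB) (u : ι → ℂ) :
    ∑ w : κB, ∑ a : κA, ‖u (e.symm (a, w))‖ ^ 2 = ∑ x, ‖u x‖ ^ 2 := by
  rw [← Equiv.sum_comp e.symm (fun ξ => ‖u ξ‖ ^ 2), Fintype.sum_prod_type]
  exact Finset.sum_comm

lemma key_bound (e : ι ≃ κA × κB) [Nonempty κB] (N : Matrix ι ι ℂ) (u v : ι → ℂ) :
    ‖star u ⬝ᵥ (truncAux e N *ᵥ v)‖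
      ≤ ‖N‖ * (Real.sqrt (∑ x, ‖u x‖ ^ 2) * Real.sqrt (∑ x, ‖v x‖ ^ 2)) := by
  classical
  set Q : (ι → ℂ) → κB → ℝ := fun u w => ∑ a : κA, ‖u (e.symm (a, w))‖ ^ 2 with hQ
  have hQnn : ∀ u w, 0 ≤ Q u w := fun u w => Finset.sum_nonneg fun _ _ => by positivity
  have hcard : (0 : ℝ) < Fintype.card κB := by
    exact_mod_cast Fintype.card_pos
  rw [dot_truncAux]
  have step1 : ‖((Fintype.card κB : ℂ))⁻¹ * ∑ c : κB, ∑ w : κB,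
        star (sliceVec e c w u) ⬝ᵥ (N *ᵥ sliceVec e c w v)‖
      ≤ ((Fintype.card κB : ℝ))⁻¹ * ∑ c : κB, ∑ w : κB,
          ‖N‖ * (Real.sqrt (Q u w) * Real.sqrt (Q v w)) := by
    rw [norm_mul]
    have hn : ‖((Fintype.card κB : ℂ))⁻¹‖ = ((Fintype.card κB : ℝ))⁻¹ := by
      rw [norm_inv]
      norm_num
    rw [hn]
    refine mul_le_mul_of_nonneg_left ?_ (by positivity)
    refine (norm_sum_le _ _).trans ?_
    refine Finset.sum_le_sum fun c _ => ?_
    refine (norm_sum_le _ _).trans ?_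
    refine Finset.sum_le_sum fun w _ => ?_
    have := inner_bound N (sliceVec e c w u) (sliceVec e c w v)
    rwa [slice_sq, slice_sq] at this
  refine step1.trans ?_
  have step2 : ∑ c : κB, ∑ w : κB, ‖N‖ * (Real.sqrt (Q u w) * Real.sqrt (Q v w))
      = (Fintype.card κB : ℝ) * (‖N‖ * ∑ w : κB, Real.sqrt (Q u w) * Real.sqrt (Q v w)) := by
    rw [Finset.sum_const, Finset.mul_sum]
    simp [Finset.mul_sum, nsmul_eq_mul]
  rw [step2]
  rw [← mul_assoc, inv_mul_cancel₀ (ne_of_gt hcard), one_mul]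
  refine mul_le_mul_of_nonneg_left ?_ (norm_nonneg _)
  have := Real.sum_sqrt_mul_sqrt_le (Finset.univ : Finset κB) (hQnn u) (hQnn v)
  refine this.trans ?_
  rw [show ∑ w : κB, Q u w = ∑ x, ‖u x‖ ^ 2 from total_sq e u,
     show ∑ w : κB, Q v w = ∑ x, ‖v x‖ ^ 2 from total_sq e v]

set_option maxHeartbeats 1000000 in
lemma truncAux_norm_le (e : ι ≃ κA × κB) [Nonempty κB] (N : Matrix ι ι ℂ) :
    ‖truncAux e N‖ ≤ ‖N‖ := by
  have mulvec : ∀ v : ι → ℂ,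
      Real.sqrt (∑ x, ‖(truncAux e N *ᵥ v) x‖ ^ 2) ≤ ‖N‖ * Real.sqrt (∑ x, ‖v x‖ ^ 2) := by
    intro v
    set u : ι → ℂ := truncAux e N *ᵥ v with hu
    have hdot : star u ⬝ᵥ (truncAux e N *ᵥ v) = ((∑ x, ‖u x‖ ^ 2 : ℝ) : ℂ) := by
      rw [← hu]
      have : star u ⬝ᵥ u = ∑ x, ((‖u x‖ : ℂ)) ^ 2 := by
        simp [dotProduct, RCLike.conj_mul]
      rw [this]
      push_cast
      rfl
    have h := key_bound e N u v
    rw [hdot] at h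
    have hnorm : ‖((∑ x, ‖u x‖ ^ 2 : ℝ) : ℂ)‖ = ∑ x, ‖u x‖ ^ 2 := by
      rw [Complex.norm_real]
      exact abs_of_nonneg (Finset.sum_nonneg fun _ _ => by positivity)
    rw [hnorm] at h
    set α := Real.sqrt (∑ x, ‖u x‖ ^ 2) with hα
    have hα2 : α ^ 2 = ∑ x, ‖u x‖ ^ 2 :=
      Real.sq_sqrt (Finset.sum_nonneg fun _ _ => by positivity)
    rcases eq_or_lt_of_le (Real.sqrt_nonneg (∑ x, ‖u x‖ ^ 2) : (0:ℝ) ≤ α) with h0 | h0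
    · rw [hα, ← h0]; exact mul_nonneg (norm_nonneg _) (Real.sqrt_nonneg _)
    · have : α * α ≤ (‖N‖ * Real.sqrt (∑ x, ‖v x‖ ^ 2)) * α := by
        rw [← sq, hα2]
        calc ∑ x, ‖u x‖ ^ 2 ≤ ‖N‖ * (α * Real.sqrt (∑ x, ‖v x‖ ^ 2)) := by rw [hα]; exact h
          _ = ‖N‖ * Real.sqrt (∑ x, ‖v x‖ ^ 2) * α := by ring
      exact le_of_mul_le_mul_right this h0
  rw [Matrix.l2_opNorm_def]
  refine ContinuousLinearMap.opNorm_le_bound _ (norm_nonneg N) fun x => ?_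
  simp only [LinearEquiv.trans_apply, LinearMap.coe_toContinuousLinearMap',
    Matrix.toEuclideanLin_apply]
  rw [EuclideanSpace.norm_eq, EuclideanSpace.norm_eq]
  have := mulvec ((WithLp.equiv 2 (ι → ℂ)) x)
  exact this

end core
def splitEquiv (n d : ℕ) (S : Finset (Fin n)) :
    (Fin n → Fin d) ≃ (({i : Fin n // i ∈ S} → Fin d) × ({i : Fin n // i ∉ S} → Fin d)) where
  toFun x := (fun i => x i.1, fun i => x i.1)
  invFun p i := if h : i ∈ S then p.1 ⟨i, h⟩ else p.2 ⟨i, h⟩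
  left_inv x := by funext i; by_cases h : i ∈ S <;> simp [h]
  right_inv p := by
    obtain ⟨p1, p2⟩ := p
    simp only [Prod.mk.injEq]
    constructor <;> funext i
    · simp [i.2]
    · simp [i.2]

/-- The normalized partial trace over `Sᶜ` tensored with the identity is a contraction in
the ℓ²→ℓ² operator norm: `‖O^{(S)}‖ ≤ ‖O‖`. -/
theorem truncate_norm_le (n d : ℕ) (hn : 1 ≤ n) (hd : 2 ≤ d)
    (O : ChainOp n d) (S : Finset (Fin n)) :
    ‖truncate O S‖ ≤ ‖O‖ := by
  haveI : Nonempty (Fin d) := ⟨⟨0, by omega⟩⟩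
  set e := splitEquiv n d S with he
  have hd0 : (d : ℂ) ≠ 0 := by exact_mod_cast (by omega : d ≠ 0)
  have hEq : truncate O S = truncAux e O := by
    funext x y
    have hcond : (∀ i ∉ S, x i = y i) ↔ (e x).2 = (e y).2 := by
      constructor
      · intro h; funext i; exact h i.1 i.2
      · intro h i hi; exact congrFun h ⟨i, hi⟩
    by_cases h : ∀ i ∉ S, x i = y i
    · rw [truncate, truncAux, if_pos h, if_pos (hcond.mp h)]
      have hmix : ∀ (x : Fin n → Fin d) (a : {i : Fin n // i ∈ S} → Fin d)
          (c : {i : Fin n // i ∉ S} → Fin d),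
          (fun i => if i ∈ S then x i else (e.symm (a, c)) i) = e.symm ((e x).1, c) := by
        intro x a c; funext i
        by_cases hi : i ∈ S <;> simp [he, splitEquiv, hi]
      have hsum : ∑ z : Fin n → Fin d,
          O (fun i => if i ∈ S then x i else z i) (fun i => if i ∈ S then y i else z i)
          = (Fintype.card ({i : Fin n // i ∈ S} → Fin d) : ℂ) *
            ∑ c : {i : Fin n // i ∉ S} → Fin d,
              O (e.symm ((e x).1, c)) (e.symm ((e y).1, c)) := by
        rw [← Equiv.sum_comp e.symm (fun z => O (fun i => if i ∈ S then x i else z i)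
          (fun i => if i ∈ S then y i else z i)), Fintype.sum_prod_type]
        simp only [hmix]
        rw [Finset.sum_const, nsmul_eq_mul, Finset.card_univ]
      rw [hsum]
      have hcards : (Fintype.card ({i : Fin n // i ∈ S} → Fin d) : ℂ) *
          (Fintype.card ({i : Fin n // i ∉ S} → Fin d) : ℂ) = (d : ℂ) ^ n := by
        have h1 : Fintype.card ({i : Fin n // i ∈ S} → Fin d) *
            Fintype.card ({i : Fin n // i ∉ S} → Fin d) = d ^ n := by
          rw [Fintype.card_fun, Fintype.card_fun, Fintype.card_fin, ← pow_add]
          congr 1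
          have := Fintype.card_subtype_compl (fun i : Fin n => i ∈ S)
          have h2 : Fintype.card {i : Fin n // i ∈ S} ≤ n := by
            have := Fintype.card_subtype_le (fun i : Fin n => i ∈ S)
            simpa using this
          simp only [Fintype.card_fin] at this ⊢
          omega
        exact_mod_cast h1
      have hA : (Fintype.card ({i : Fin n // i ∈ S} → Fin d) : ℂ) ≠ 0 := by
        exact_mod_cast Fintype.card_ne_zero
      have hB : (Fintype.card ({i : Fin n // i ∉ S} → Fin d) : ℂ) ≠ 0 := by
        exact_mod_cast Fintype.card_ne_zero
      rw [← hcards]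
      field_simp
    · rw [truncate, truncAux, if_neg h, if_neg (fun hc => h (hcond.mpr hc))]
  rw [hEq]
  exact truncAux_norm_le e O
end

section
/- Let O be an operator on the n-site quantum chain, let S ⊆ {1,…,n}, and let ε ≥ 0. If ‖O·U − U·O‖ ≤ ε for every unitary matrix U that is supported on the complement S^c, then ‖O − O^{(S)}‖ ≤ ε. -/
open scoped Matrix.Norms.L2Operator

/-- `M` is supported on the set of sites `L`: entries vanish whenever the two configurations
differ at a site outside `L`, and entries depend only on the restrictions of the
configurations to `L`. -/
def SupportedOn {n d : ℕ} (M : ChainOp n d) (L : Finset (Fin n)) : Prop :=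
  (∀ x y : Fin n → Fin d, (∃ i ∉ L, x i ≠ y i) → M x y = 0) ∧
  (∀ x y x' y' : Fin n → Fin d,
      (∀ i ∈ L, x i = x' i) → (∀ i ∈ L, y i = y' i) →
      (∀ i ∉ L, x i = y i) → (∀ i ∉ L, x' i = y' i) → M x y = M x' y')

set_option linter.unusedSectionVars false
set_option linter.unusedVariables false


noncomputable def zet (d : ℕ) : ℂ := Complex.exp (2 * Real.pi * Complex.I / d)

lemma zet_ne_zero (d : ℕ) : zet d ≠ 0 := Complex.exp_ne_zero _

lemma conj_zet (d : ℕ) : (starRingEnd ℂ) (zet d) = (zet d)⁻¹ := by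
  rw [zet, ← Complex.exp_conj, ← Complex.exp_neg]
  congr 1
  simp only [neg_div, neg_inj, map_div₀, map_mul, Complex.conj_I, map_ofNat,
    Complex.conj_ofReal, map_natCast, mul_neg, neg_div, neg_neg]

lemma conj_zet_pow (d m : ℕ) : (starRingEnd ℂ) (zet d ^ m) = (zet d ^ m)⁻¹ := by
  rw [map_pow, conj_zet, inv_pow]

lemma zet_pow_d {d : ℕ} (hd : d ≠ 0) : zet d ^ d = 1 :=
  (Complex.isPrimitiveRoot_exp d hd).pow_eq_one

lemma site_sum {d : ℕ} (hd : d ≠ 0) (j k : Fin d) :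
    ∑ c : Fin d, zet d ^ ((c : ℕ) * (j : ℕ)) * (starRingEnd ℂ) (zet d ^ ((c : ℕ) * (k : ℕ)))
      = if j = k then (d : ℂ) else 0 := by
  have hterm : ∀ c : Fin d,
      zet d ^ ((c : ℕ) * (j : ℕ)) * (starRingEnd ℂ) (zet d ^ ((c : ℕ) * (k : ℕ)))
        = (zet d ^ (j : ℕ) / zet d ^ (k : ℕ)) ^ (c : ℕ) := by
    intro c
    rw [conj_zet_pow, div_pow, ← pow_mul, ← pow_mul, div_eq_mul_inv,
      Nat.mul_comm (j : ℕ) c, Nat.mul_comm (k : ℕ) c]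
  simp only [hterm]
  rw [Fin.sum_univ_eq_sum_range (fun i => (zet d ^ (j : ℕ) / zet d ^ (k : ℕ)) ^ i) d]
  by_cases hjk : j = k
  · subst hjk
    simp [div_self (pow_ne_zero _ (zet_ne_zero d))]
  · have hne : zet d ^ (j : ℕ) / zet d ^ (k : ℕ) ≠ 1 := by
      intro h
      exact hjk (Fin.ext ((Complex.isPrimitiveRoot_exp d hd).pow_inj j.2 k.2
        (div_eq_one_iff_eq (pow_ne_zero _ (zet_ne_zero d)) |>.mp h)))
    rw [geom_sum_eq hne]
    have : (zet d ^ (j : ℕ) / zet d ^ (k : ℕ)) ^ d = 1 := by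
      rw [div_pow, ← pow_mul, ← pow_mul, Nat.mul_comm (j:ℕ) d, Nat.mul_comm (k:ℕ) d,
        pow_mul, pow_mul, zet_pow_d hd, one_pow, one_pow, div_one]
    simp [this, hjk]

section weyl
variable {n d : ℕ} [NeZero d] (S : Finset (Fin n))

/-- phase of the Weyl operator -/
noncomputable def wphase (b x : Fin n → Fin d) : ℂ :=
  ∏ i ∈ Sᶜ, zet d ^ ((b i : ℕ) * (x i : ℕ))

/-- shifted configuration -/
def wsh (a x : Fin n → Fin d) : Fin n → Fin d :=
  fun i => x i - (if i ∈ S then 0 else a i)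

/-- Weyl (generalized Pauli) operator supported on `Sᶜ` -/
noncomputable def weyl (a b : Fin n → Fin d) : ChainOp n d :=
  fun x y => if y = wsh S a x then wphase S b x else 0

lemma conj_wphase (b x : Fin n → Fin d) :
    (starRingEnd ℂ) (wphase S b x) = (wphase S b x)⁻¹ := by
  rw [wphase, map_prod, ← Finset.prod_inv_distrib]
  exact Finset.prod_congr rfl fun i _ => conj_zet_pow d _

lemma wphase_ne_zero (b x : Fin n → Fin d) : wphase S b x ≠ 0 :=
  Finset.prod_ne_zero_iff.mpr fun i _ => pow_ne_zero _ (zet_ne_zero d)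

lemma wphase_mul_conj (b x : Fin n → Fin d) :
    wphase S b x * (starRingEnd ℂ) (wphase S b x) = 1 := by
  rw [conj_wphase, mul_inv_cancel₀ (wphase_ne_zero S b x)]

lemma wsh_inj {a : Fin n → Fin d} {x y : Fin n → Fin d} (h : wsh S a x = wsh S a y) : x = y := by
  funext i
  have := congrFun h i
  simpa [wsh, sub_left_inj] using this

lemma wsh_eq_iff {a z x : Fin n → Fin d} :
    x = wsh S a z ↔ z = fun i => x i + (if i ∈ S then 0 else a i) := by
  rw [funext_iff, funext_iff]
  refine forall_congr' fun i => ?_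
  rw [wsh, eq_sub_iff_add_eq, eq_comm, eq_comm (a := z i)]

lemma weyl_mul_conjTranspose (a b : Fin n → Fin d) :
    weyl S a b * (weyl S a b).conjTranspose = 1 := by
  ext x y
  rw [Matrix.mul_apply]
  have hterm : ∀ z, weyl S a b x z * (weyl S a b).conjTranspose z y
      = if z = wsh S a x then wphase S b x * (starRingEnd ℂ) (weyl S a b y (wsh S a x)) else 0 := by
    intro z
    by_cases hz : z = wsh S a x <;> simp [weyl, Matrix.conjTranspose_apply, hz]
  simp only [hterm, Finset.sum_ite_eq' Finset.univ, Finset.mem_univ, if_true]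
  by_cases hxy : x = y
  · subst hxy
    simp [weyl, wphase_mul_conj, Matrix.one_apply_eq]
  · have : ¬ (wsh S a x = wsh S a y) := fun h => hxy (wsh_inj S h)
    simp [weyl, this, Matrix.one_apply_ne hxy]

lemma conjTranspose_mul_weyl (a b : Fin n → Fin d) :
    (weyl S a b).conjTranspose * weyl S a b = 1 := by
  ext x y
  rw [Matrix.mul_apply]
  set xp : Fin n → Fin d := fun i => x i + (if i ∈ S then 0 else a i) with hxp
  have hterm : ∀ z, (weyl S a b).conjTranspose x z * weyl S a b z y
      = if z = xp then (starRingEnd ℂ) (weyl S a b xp x) * weyl S a b xp y else 0 := by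
    intro z
    by_cases hz : z = xp
    · subst hz; simp [Matrix.conjTranspose_apply]
    · have : ¬ (x = wsh S a z) := fun h => hz ((wsh_eq_iff S).mp h)
      simp [weyl, Matrix.conjTranspose_apply, this, hz]
  simp only [hterm, Finset.sum_ite_eq' Finset.univ, Finset.mem_univ, if_true]
  have hx : x = wsh S a xp := (wsh_eq_iff S).mpr rfl
  by_cases hxy : x = y
  · subst hxy
    simp [weyl, ← hx, mul_comm, wphase_mul_conj, Matrix.one_apply_eq]
  · simp [weyl, ← hx, Ne.symm hxy, Matrix.one_apply_ne hxy]

lemma weyl_supportedOn (a b : Fin n → Fin d) : SupportedOn (weyl S a b) Sᶜ := by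
  constructor
  · intro x y ⟨i, hi, hne⟩
    rw [Finset.notMem_compl] at hi
    have : ¬ (y = wsh S a x) := by
      intro h
      exact hne (by simpa [wsh, hi] using (congrFun h i).symm)
    simp [weyl, this]
  · intro x y x' y' hx hy hxy hxy'
    have hphase : wphase S b x = wphase S b x' :=
      Finset.prod_congr rfl fun i hi => by rw [hx i hi]
    have hiff : (y = wsh S a x) ↔ (y' = wsh S a x') := by
      rw [funext_iff, funext_iff]
      refine forall_congr' fun i => ?_
      by_cases hi : i ∈ S
      · have hi' : i ∉ Sᶜ := by simp [hi]
        simp [wsh, hi, (hxy i hi').symm, (hxy' i hi').symm]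
      · have hi' : i ∈ Sᶜ := Finset.mem_compl.mpr hi
        simp [wsh, hi, hx i hi', hy i hi']
    unfold weyl
    rw [if_congr hiff hphase rfl]
end weyl

section twirl
variable {n d : ℕ} [NeZero d] (S : Finset (Fin n))

lemma phase_sum (x y : Fin n → Fin d) :
    ∑ b : Fin n → Fin d, wphase S b x * (starRingEnd ℂ) (wphase S b y)
      = if ∀ i ∉ S, x i = y i then ((d : ℂ)) ^ n else 0 := by
  have hd : d ≠ 0 := NeZero.ne d
  -- rewrite each summand as a product over univ
  have hterm : ∀ b : Fin n → Fin d,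
      wphase S b x * (starRingEnd ℂ) (wphase S b y)
        = ∏ i : Fin n,
            (if i ∈ Sᶜ then zet d ^ ((b i : ℕ) * (x i : ℕ))
              * (starRingEnd ℂ) (zet d ^ ((b i : ℕ) * (y i : ℕ))) else 1) := by
    intro b
    rw [wphase, wphase, map_prod, ← Finset.prod_mul_distrib]
    rw [← Finset.prod_subset (Finset.subset_univ Sᶜ)
      (f := fun i => if i ∈ Sᶜ then zet d ^ ((b i : ℕ) * (x i : ℕ))
        * (starRingEnd ℂ) (zet d ^ ((b i : ℕ) * (y i : ℕ))) else 1)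
      (fun i _ hi => by simp [hi])]
    exact Finset.prod_congr rfl fun i hi => by simp [hi]
  simp only [hterm]
  have key : (∏ i : Fin n, ∑ c : Fin d,
      (if i ∈ Sᶜ then zet d ^ ((c : ℕ) * (x i : ℕ))
        * (starRingEnd ℂ) (zet d ^ ((c : ℕ) * (y i : ℕ))) else 1))
      = ∑ b : Fin n → Fin d, ∏ i : Fin n,
          (if i ∈ Sᶜ then zet d ^ ((b i : ℕ) * (x i : ℕ))
            * (starRingEnd ℂ) (zet d ^ ((b i : ℕ) * (y i : ℕ))) else 1) := by
    rw [Finset.prod_univ_sum, Fintype.piFinset_univ]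
  rw [← key]
  have hsums : ∀ i : Fin n,
      (∑ c : Fin d, (if i ∈ Sᶜ then zet d ^ ((c : ℕ) * (x i : ℕ))
        * (starRingEnd ℂ) (zet d ^ ((c : ℕ) * (y i : ℕ))) else 1))
      = if i ∈ Sᶜ then (if x i = y i then (d : ℂ) else 0) else (d : ℂ) := by
    intro i
    by_cases hi : i ∈ Sᶜ
    · simp only [hi, if_true]; exact site_sum hd (x i) (y i)
    · simp [hi]
  rw [Finset.prod_congr rfl fun i _ => hsums i]
  rw [← Finset.prod_compl_mul_prod S]
  have h1 : ∏ i ∈ Sᶜ, (if i ∈ Sᶜ then (if x i = y i then (d : ℂ) else 0) else (d : ℂ))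
      = ∏ i ∈ Sᶜ, (if x i = y i then (d : ℂ) else 0) :=
    Finset.prod_congr rfl fun i hi => by simp [hi]
  have h2 : ∏ i ∈ S, (if i ∈ Sᶜ then (if x i = y i then (d : ℂ) else 0) else (d : ℂ))
      = (d : ℂ) ^ S.card := by
    have hc : ∀ i ∈ S, (if i ∈ Sᶜ then (if x i = y i then (d : ℂ) else 0) else (d : ℂ)) = (d : ℂ) :=
      fun i hi => by simp [Finset.mem_compl, hi]
    rw [Finset.prod_congr rfl hc, Finset.prod_const]
  rw [h1, h2]
  by_cases hxy : ∀ i ∉ S, x i = y i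
  · have hall : ∀ i ∈ Sᶜ, (if x i = y i then (d : ℂ) else 0) = (d : ℂ) :=
      fun i hi => by simp [hxy i (Finset.mem_compl.mp hi)]
    rw [Finset.prod_congr rfl hall, Finset.prod_const, if_pos hxy, ← pow_add]
    congr 1
    rw [add_comm]
    simpa using Finset.card_add_card_compl S
  · push_neg at hxy
    obtain ⟨i, hiS, hne⟩ := hxy
    rw [Finset.prod_eq_zero (Finset.mem_compl.mpr hiS) (by simp [hne]), if_neg (by push_neg; exact ⟨i, hiS, hne⟩), zero_mul]

lemma shift_sum (O : ChainOp n d) (x y : Fin n → Fin d) (hxy : ∀ i ∉ S, x i = y i) :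
    ∑ a : Fin n → Fin d, O (wsh S a x) (wsh S a y)
      = ∑ z : Fin n → Fin d,
        O (fun i => if i ∈ S then x i else z i) (fun i => if i ∈ S then y i else z i) := by
  refine Fintype.sum_equiv (Equiv.piCongrRight fun i => Equiv.subLeft (x i)) _ _ fun a => ?_
  congr 1
  · funext i
    by_cases hi : i ∈ S <;> simp [wsh, hi, Equiv.subLeft]
  · funext i
    by_cases hi : i ∈ S
    · simp [wsh, hi]
    · simp [wsh, hi, Equiv.subLeft, hxy i hi]

lemma weyl_conj_entry (a b : Fin n → Fin d) (O : ChainOp n d) (x y : Fin n → Fin d) :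
    (weyl S a b * O * (weyl S a b).conjTranspose) x y
      = (wphase S b x * (starRingEnd ℂ) (wphase S b y)) * O (wsh S a x) (wsh S a y) := by
  rw [Matrix.mul_apply]
  have h1 : ∀ w, (weyl S a b * O) x w = wphase S b x * O (wsh S a x) w := by
    intro w
    rw [Matrix.mul_apply]
    rw [Finset.sum_congr rfl (fun z _ => show weyl S a b x z * O z w
      = if z = wsh S a x then wphase S b x * O (wsh S a x) w else 0 from by
        by_cases hz : z = wsh S a x <;> simp [weyl, hz])]
    simp
  rw [Finset.sum_congr rfl (fun w _ => show (weyl S a b * O) x w * (weyl S a b).conjTranspose w y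
      = if w = wsh S a y then wphase S b x * O (wsh S a x) (wsh S a y) * (starRingEnd ℂ) (wphase S b y) else 0 from by
        by_cases hw : w = wsh S a y <;>
          simp [h1, Matrix.conjTranspose_apply, weyl, hw])]
  simp
  ring

lemma twirl (O : ChainOp n d) :
    ∑ a : Fin n → Fin d, ∑ b : Fin n → Fin d,
        weyl S a b * O * (weyl S a b).conjTranspose
      = (((d : ℂ) ^ n) * ((d : ℂ) ^ n)) • truncate O S := by
  have hd : (d : ℂ) ^ n ≠ 0 := pow_ne_zero _ (Nat.cast_ne_zero.mpr (NeZero.ne d))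
  ext x y
  simp only [Matrix.sum_apply, Matrix.smul_apply, weyl_conj_entry, smul_eq_mul]
  rw [Finset.sum_comm]
  rw [Finset.sum_congr rfl fun b _ => (Finset.mul_sum _ _ _).symm]
  rw [← Finset.sum_mul]
  rw [phase_sum]
  by_cases hxy : ∀ i ∉ S, x i = y i
  · rw [if_pos hxy, shift_sum S O x y hxy, truncate, if_pos hxy]
    field_simp
  · rw [if_neg hxy, truncate, if_neg hxy, zero_mul, mul_zero]
end twirl

/-- If `O` almost commutes (up to `ε` in ℓ²→ℓ² operator norm) with every unitary supported on
`Sᶜ`, then `O` is `ε`-close to its truncation `O^{(S)}`. -/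
theorem truncate_close_of_almost_commutes (n d : ℕ) (hn : 1 ≤ n) (hd : 2 ≤ d)
    (O : ChainOp n d) (S : Finset (Fin n)) (ε : ℝ) (hε : 0 ≤ ε)
    (hcomm : ∀ U : ChainOp n d, U * U.conjTranspose = 1 → U.conjTranspose * U = 1 →
      SupportedOn U Sᶜ → ‖O * U - U * O‖ ≤ ε) :
    ‖O - truncate O S‖ ≤ ε := by
  haveI : NeZero d := ⟨by omega⟩
  haveI : Nonempty (Fin d) := ⟨⟨0, by omega⟩⟩
  haveI : Nontrivial (ChainOp n d) := by
    refine ⟨1, 0, fun h => ?_⟩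
    have := congrFun (congrFun h (fun _ => 0)) (fun _ => 0)
    simp [Matrix.one_apply] at this
  have hdn : ((d : ℂ) ^ n) ≠ 0 := pow_ne_zero _ (Nat.cast_ne_zero.mpr (NeZero.ne d))
  have hunit : ∀ a b : Fin n → Fin d, weyl S a b ∈ unitary (ChainOp n d) := fun a b =>
    ⟨by rw [Matrix.star_eq_conjTranspose]; exact conjTranspose_mul_weyl S a b,
     by rw [Matrix.star_eq_conjTranspose]; exact weyl_mul_conjTranspose S a b⟩
  have hnormW : ∀ a b : Fin n → Fin d, ‖(weyl S a b).conjTranspose‖ = 1 := fun a b => by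
    rw [Matrix.l2_opNorm_conjTranspose]
    exact CStarRing.norm_coe_unitary (⟨weyl S a b, hunit a b⟩ : unitary (ChainOp n d))
  set c : ℂ := ((d : ℂ) ^ n) * ((d : ℂ) ^ n) with hc
  have hc0 : c ≠ 0 := mul_ne_zero hdn hdn
  have hkey : c • (O - truncate O S)
      = ∑ a : Fin n → Fin d, ∑ b : Fin n → Fin d,
          (O * weyl S a b - weyl S a b * O) * (weyl S a b).conjTranspose := by
    have h1 : ∀ a b : Fin n → Fin d,
        (O * weyl S a b - weyl S a b * O) * (weyl S a b).conjTranspose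
          = O - weyl S a b * O * (weyl S a b).conjTranspose := by
      intro a b
      rw [sub_mul, mul_assoc O, weyl_mul_conjTranspose, mul_one]
    simp only [h1]
    rw [Finset.sum_congr rfl fun a _ => Finset.sum_sub_distrib _ _,
      Finset.sum_sub_distrib _ _, twirl]
    have hconst : ∑ _a : Fin n → Fin d, ∑ _b : Fin n → Fin d, O = c • O := by
      simp only [Finset.sum_const, Finset.card_univ]
      simp only [← Nat.cast_smul_eq_nsmul ℂ]
      rw [smul_smul, hc]
      congr 1
      simp [Fintype.card_fun]
    rw [hconst, ← smul_sub]
  have hexp : O - truncate O S = c⁻¹ • ∑ a : Fin n → Fin d, ∑ b : Fin n → Fin d,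
      (O * weyl S a b - weyl S a b * O) * (weyl S a b).conjTranspose := by
    rw [← hkey, smul_smul, inv_mul_cancel₀ hc0, one_smul]
  rw [hexp, norm_smul]
  have hbound : ‖∑ a : Fin n → Fin d, ∑ b : Fin n → Fin d,
      (O * weyl S a b - weyl S a b * O) * (weyl S a b).conjTranspose‖
        ≤ ((d : ℝ) ^ n * (d : ℝ) ^ n) * ε := by
    calc ‖∑ a : Fin n → Fin d, ∑ b : Fin n → Fin d,
        (O * weyl S a b - weyl S a b * O) * (weyl S a b).conjTranspose‖
        ≤ ∑ a : Fin n → Fin d, ∑ b : Fin n → Fin d,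
            ‖(O * weyl S a b - weyl S a b * O) * (weyl S a b).conjTranspose‖ := by
          refine le_trans (norm_sum_le _ _) (Finset.sum_le_sum fun a _ => norm_sum_le _ _)
      _ ≤ ∑ _a : Fin n → Fin d, ∑ _b : Fin n → Fin d, ε := by
          refine Finset.sum_le_sum fun a _ => Finset.sum_le_sum fun b _ => ?_
          calc ‖(O * weyl S a b - weyl S a b * O) * (weyl S a b).conjTranspose‖
              ≤ ‖O * weyl S a b - weyl S a b * O‖ * ‖(weyl S a b).conjTranspose‖ :=
                norm_mul_le _ _
            _ = ‖O * weyl S a b - weyl S a b * O‖ := by rw [hnormW, mul_one]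
            _ ≤ ε := hcomm _ (weyl_mul_conjTranspose S a b)
                (conjTranspose_mul_weyl S a b) (weyl_supportedOn S a b)
      _ = ((d : ℝ) ^ n * (d : ℝ) ^ n) * ε := by
          simp only [Finset.sum_const, Finset.card_univ, smul_smul, smul_eq_mul,
            Fintype.card_fun, Fintype.card_fin]
          push_cast
          ring
  have hcnorm : ‖c⁻¹‖ = ((d : ℝ) ^ n * (d : ℝ) ^ n)⁻¹ := by
    rw [norm_inv, hc, norm_mul, norm_pow, Complex.norm_natCast]
  rw [hcnorm]
  have hdpos : (0 : ℝ) < (d : ℝ) ^ n * (d : ℝ) ^ n := by positivity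
  calc ((d : ℝ) ^ n * (d : ℝ) ^ n)⁻¹ * ‖∑ a : Fin n → Fin d, ∑ b : Fin n → Fin d,
      (O * weyl S a b - weyl S a b * O) * (weyl S a b).conjTranspose‖
      ≤ ((d : ℝ) ^ n * (d : ℝ) ^ n)⁻¹ * (((d : ℝ) ^ n * (d : ℝ) ^ n) * ε) := by
        exact mul_le_mul_of_nonneg_left hbound (by positivity)
    _ = ε := by field_simp
end
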